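/- The precedence inequalities PREC imply the original precedence constraints: if a 0/1 vector X on the arcs of G_LT satisfies, for every request r and every delivery time threshold i, that the total (over all trucks) number of selected pickup arcs of r completing by time i − len(l^P_r, l^D_r) is at least the total number of selected delivery arcs of r starting by time i, and X additionally has no repeated services (at most one pickup arc of each r selected overall), then for every request r and every selected delivery arc e of r there exists a selected pickup arc of r completing no later than the start time of e. -/
import Mathlib


/-- The precedence inequalities PREC imply the original
precedence constraints.  Here `A` is the arc set of `G_LT`, `EP r`/`ED r` are
the pickup/delivery arcs of request `r`, `start e = 𝓘(e)` and `fin e = 𝓘'(e)`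
are the start and end times of arc `e`, `lenr r = len(l^P_r, l^D_r)` is the
travel time from the pickup to the delivery location of `r`, and
`X : V → A → Bool` is a 0/1 vector over trucks and arcs.

If for every request `r` and every delivery time threshold `i` the total (over
all trucks) number of selected pickup arcs of `r` completing by time
`i − lenr r` (i.e. with `fin e + lenr r ≤ i`) is at least the total number of
selected delivery arcs of `r` starting by time `i`, and `X` has no repeated
services, then for every request `r` and every selected delivery arc `e` of
`r` there is a selected pickup arc of `r` completing no later than the start
time of `e`. -/
theorem stmt_5 {V A R : Type} [Fintype V] [DecidableEq A]
    (EP ED : R → Finset A) (start fin : A → ℕ) (lenr : R → ℕ)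
    (X : V → A → Bool)
    (hPREC : ∀ (r : R) (i : ℕ),
      ∑ v : V, ((ED r).filter (fun e => X v e = true ∧ start e ≤ i)).card
        ≤ ∑ v : V, ((EP r).filter (fun e => X v e = true ∧ fin e + lenr r ≤ i)).card)
    (hnorep : ∀ r : R,
      ∑ v : V, ((EP r).filter (fun e => X v e = true)).card ≤ 1 ∧
      ∑ v : V, ((ED r).filter (fun e => X v e = true)).card ≤ 1) :
    ∀ (r : R) (v : V) (e : A), e ∈ ED r → X v e = true →
      ∃ (v' : V) (e' : A), e' ∈ EP r ∧ X v' e' = true ∧ fin e' ≤ start e := by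
  intro r v e he hx
  have h := hPREC r (start e)
  have hpos : 0 < ∑ v' : V, ((ED r).filter (fun e' => X v' e' = true ∧ start e' ≤ start e)).card := by
    calc 0 < ((ED r).filter (fun e' => X v e' = true ∧ start e' ≤ start e)).card :=
          Finset.card_pos.mpr ⟨e, Finset.mem_filter.mpr ⟨he, hx, le_refl _⟩⟩
      _ ≤ _ := Finset.single_le_sum (f := fun v => ((ED r).filter (fun e' => X v e' = true ∧ start e' ≤ start e)).card) (fun _ _ => Nat.zero_le _) (Finset.mem_univ v)
  have hpos' := lt_of_lt_of_le hpos h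
  have : ∃ v' ∈ Finset.univ, 0 < ((EP r).filter (fun e' => X v' e' = true ∧ fin e' + lenr r ≤ start e)).card := by
    by_contra hc
    push_neg at hc
    simp only [Nat.le_zero] at hc
    have : ∑ v' : V, ((EP r).filter (fun e' => X v' e' = true ∧ fin e' + lenr r ≤ start e)).card = 0 :=
      Finset.sum_eq_zero fun v' hv' => hc v' hv'
    omega
  obtain ⟨v', -, hv'⟩ := this
  obtain ⟨e', he'⟩ := Finset.card_pos.mp hv'
  obtain ⟨heP, hxe', hle⟩ := Finset.mem_filter.mp he'
  exact ⟨v', e', heP, hxe', le_trans (Nat.le_add_right _ _) hle⟩
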